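/- Let T be a strongly guarded monad on a distributive category C and suppose (A_σ, ι_σ) is a greatest σ-algebra for a summand σ of A. Then there is a unique morphism α_σ : T(A_σ) → A_σ such that ι_σ ∘ α_σ = ι_σ*, and the pair (A_σ, α_σ) is an Eilenberg–Moore T-algebra which ι_σ exhibits as a T-subalgebra of the free algebra (TA, μ_A). -/
import Mathlib


open CategoryTheory Limits

universe v u

variable (C : Type u) [Category.{v} C] [HasFiniteProducts C] [HasFiniteCoproducts C]

/-- The canonical distributivity morphism `(X × Y) + (X × Z) ⟶ X × (Y + Z)`. -/
noncomputable def distCan (X Y Z : C) : (X ⨯ Y) ⨿ (X ⨯ Z) ⟶ X ⨯ (Y ⨿ Z) :=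
  coprod.desc (prod.map (𝟙 X) coprod.inl) (prod.map (𝟙 X) coprod.inr)

/-- A distributive category: the canonical morphism
`(X × Y) + (X × Z) ⟶ X × (Y + Z)` is an isomorphism. -/
class Distributive : Prop where
  isIso : ∀ X Y Z : C, IsIso (distCan C X Y Z)

attribute [instance] Distributive.isIso

/-- The inverse `dist` of the canonical distributivity morphism. -/
noncomputable def distInv [Distributive C] (X Y Z : C) :
    X ⨯ (Y ⨿ Z) ⟶ (X ⨯ Y) ⨿ (X ⨯ Z) :=
  inv (distCan C X Y Z)

/-- A monad on `C` presented as a Kleisli triple. -/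
structure KMonad where
  obj : C → C
  η : ∀ X : C, X ⟶ obj X
  bind : ∀ {X Y : C}, (X ⟶ obj Y) → (obj X ⟶ obj Y)
  bind_η : ∀ X : C, bind (η X) = 𝟙 (obj X)
  η_bind : ∀ {X Y : C} (f : X ⟶ obj Y), η X ≫ bind f = f
  bind_bind : ∀ {X Y Z : C} (f : X ⟶ obj Y) (g : Y ⟶ obj Z),
      bind (f ≫ bind g) = bind f ≫ bind g

variable {C}

/-- The functorial action of a Kleisli triple. -/
def KMonad.map (M : KMonad C) {X Y : C} (f : X ⟶ Y) : M.obj X ⟶ M.obj Y :=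
  M.bind (f ≫ M.η Y)

variable (C)

/-- A strong monad on a category with finite products: a Kleisli triple together
with a strength satisfying the standard coherence conditions. -/
structure SMonad extends KMonad C where
  τ : ∀ X Y : C, X ⨯ obj Y ⟶ obj (X ⨯ Y)
  τ_natural : ∀ {X X' Y Y' : C} (f : X ⟶ X') (g : Y ⟶ Y'),
      prod.map f (bind (g ≫ η Y')) ≫ τ X' Y'
        = τ X Y ≫ bind (prod.map f g ≫ η (X' ⨯ Y'))
  τ_η : ∀ X Y : C, prod.map (𝟙 X) (η Y) ≫ τ X Y = η (X ⨯ Y)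
  τ_bind : ∀ {X Y Z : C} (f : Y ⟶ obj Z),
      prod.map (𝟙 X) (bind f) ≫ τ X Z = τ X Y ≫ bind (prod.map (𝟙 X) f ≫ τ X Z)
  τ_unitor : ∀ Y : C, τ (⊤_ C) Y ≫ bind (prod.snd ≫ η Y) = prod.snd
  τ_assoc : ∀ X Y Z : C,
      (prod.associator X Y (obj Z)).hom ≫ prod.map (𝟙 X) (τ Y Z) ≫ τ X (Y ⨯ Z) ≫
          bind ((prod.associator X Y Z).inv ≫ η ((X ⨯ Y) ⨯ Z))
        = τ (X ⨯ Y) Z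

variable {C}

/-- The morphism `δ = T dist⁻¹ ∘ τ : X × T(Y+Z) ⟶ T(X×Y + X×Z)`. -/
noncomputable def SMonad.δ [Distributive C] (M : SMonad C) (X Y Z : C) :
    X ⨯ M.obj (Y ⨿ Z) ⟶ M.obj ((X ⨯ Y) ⨿ (X ⨯ Z)) :=
  M.τ X (Y ⨿ Z) ≫ M.toKMonad.map (distInv C X Y Z)

variable (C)

/-- A (coproduct) summand `Y' ↪ Y`: a complement `compl` together with an
isomorphism `Y' ⨿ compl ≅ Y`.  The injection is `Summand.ι`. -/
structure Summand (Y' Y : C) where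
  compl : C
  iso : Y' ⨿ compl ≅ Y

namespace Summand

variable {C}

/-- The summand injection `Y' ⟶ Y`. -/
noncomputable def ι {Y' Y : C} (σ : Summand C Y' Y) : Y' ⟶ Y :=
  coprod.inl ≫ σ.iso.hom

/-- The complement injection. -/
noncomputable def ι' {Y' Y : C} (σ : Summand C Y' Y) : σ.compl ⟶ Y :=
  coprod.inr ≫ σ.iso.hom

variable (C)

/-- The canonical left summand `Y ↪ Y ⨿ Z`. -/
noncomputable def inlS (Y Z : C) : Summand C Y (Y ⨿ Z) :=
  ⟨Z, Iso.refl _⟩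

/-- The canonical right summand `Z ↪ Y ⨿ Z`. -/
noncomputable def inrS (Y Z : C) : Summand C Z (Y ⨿ Z) :=
  ⟨Y, coprod.braiding Z Y⟩

variable {C}

/-- Transport of a summand along an isomorphism of the ambient object. -/
noncomputable def ofIso {Y' Y Z : C} (σ : Summand C Y' Y) (θ : Y ≅ Z) : Summand C Y' Z :=
  ⟨σ.compl, σ.iso ≪≫ θ⟩

/-- Composition of summands: a summand of a summand is a summand. -/
noncomputable def comp {Y'' Y' Y : C} (σ : Summand C Y' Y) (θ : Summand C Y'' Y') :
    Summand C Y'' Y :=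
  ⟨θ.compl ⨿ σ.compl,
    (coprod.associator Y'' θ.compl σ.compl).symm ≪≫
      coprod.mapIso θ.iso (Iso.refl σ.compl) ≪≫ σ.iso⟩

/-- The summand `σ + id_Z : Y' ⨿ Z ↪ Y ⨿ Z` induced by `σ : Y' ↪ Y`. -/
noncomputable def sumId {Y' Y : C} (σ : Summand C Y' Y) (Z : C) :
    Summand C (Y' ⨿ Z) (Y ⨿ Z) :=
  ⟨σ.compl,
    coprod.associator Y' Z σ.compl ≪≫
      coprod.mapIso (Iso.refl Y') (coprod.braiding Z σ.compl) ≪≫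
      (coprod.associator Y' σ.compl Z).symm ≪≫
      coprod.mapIso σ.iso (Iso.refl Z)⟩

/-- The summand `id_W × σ : W × Y' ↪ W × Y` (using distributivity). -/
noncomputable def prodLeft [Distributive C] {Y' Y : C} (σ : Summand C Y' Y) (W : C) :
    Summand C (W ⨯ Y') (W ⨯ Y) :=
  ⟨W ⨯ σ.compl, asIso (distCan C W Y' σ.compl) ≪≫ prod.mapIso (Iso.refl W) σ.iso⟩

/-- The union summand `[inl ∘ inr , inr] : X ⨿ X ↪ (Y ⨿ X) ⨿ X`
used in the codiagonal law. -/
noncomputable def codiagS (Y X : C) : Summand C (X ⨿ X) ((Y ⨿ X) ⨿ X) :=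
  ⟨Y, coprod.braiding (X ⨿ X) Y ≪≫ (coprod.associator Y X X).symm⟩

end Summand

/-- A notion of abstract guardedness on a strong monad, closed under the rules
(trv), (sum), (cmp) and (str): a strongly guarded monad. -/
structure GuardStruct [Distributive C] (M : SMonad C) where
  Guarded : ∀ {X Y' Y : C}, (X ⟶ M.obj Y) → Summand C Y' Y → Prop
  trv : ∀ {X Y Z : C} (f : X ⟶ M.obj Y),
      Guarded (f ≫ M.toKMonad.map (coprod.inl : Y ⟶ Y ⨿ Z)) (Summand.inrS C Y Z)
  sum : ∀ {X Y Z' Z : C} (f : X ⟶ M.obj Z) (g : Y ⟶ M.obj Z) (σ : Summand C Z' Z),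
      Guarded f σ → Guarded g σ → Guarded (coprod.desc f g) σ
  cmp : ∀ {X Y Z V' V : C} (f : X ⟶ M.obj (Y ⨿ Z)) (g : Y ⟶ M.obj V) (h : Z ⟶ M.obj V)
      (σ : Summand C V' V), Guarded f (Summand.inrS C Y Z) → Guarded g σ →
      Guarded (f ≫ M.bind (coprod.desc g h)) σ
  str : ∀ {X Y' Y : C} (W : C) (f : X ⟶ M.obj Y) (σ : Summand C Y' Y),
      Guarded f σ → Guarded (prod.map (𝟙 W) f ≫ M.τ W Y) (σ.prodLeft W)

/-- A greatest `σ`-algebra: an object `carrier` with a `σ`-guarded morphism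
`ι : carrier ⟶ TA` through which every `σ`-guarded morphism into `TA` factors
uniquely. -/
structure GreatestAlg [Distributive C] (M : SMonad C) (G : GuardStruct C M)
    {A' A : C} (σ : Summand C A' A) where
  carrier : C
  ι : carrier ⟶ M.obj A
  guarded : G.Guarded ι σ
  factor : ∀ {X : C} (f : X ⟶ M.obj A), G.Guarded f σ →
      ∃! fh : X ⟶ carrier, f = fh ≫ ι

/-- If `(A_σ, ι_σ)` is a greatest `σ`-algebra, then there is a unique
`α : T A_σ ⟶ A_σ` with `ι_σ ∘ α = ι_σ*`, and `(A_σ, α)` is an Eilenberg–Moore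
`T`-algebra which `ι_σ` exhibits as a `T`-subalgebra of the free algebra
`(TA, μ_A)`. -/
theorem greatest_sigma_algebra_em {C : Type u} [Category.{v} C] [HasFiniteProducts C]
    [HasFiniteCoproducts C] [Distributive C] (M : SMonad C) (G : GuardStruct C M)
    {A' A : C} (σ : Summand C A' A) (P : GreatestAlg C M G σ) :
    (∃! α : M.obj P.carrier ⟶ P.carrier, α ≫ P.ι = M.bind P.ι)
    ∧ ∀ α : M.obj P.carrier ⟶ P.carrier, α ≫ P.ι = M.bind P.ι →
        -- (A_σ, α) is an Eilenberg–Moore T-algebra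
        (M.η P.carrier ≫ α = 𝟙 P.carrier)
        ∧ (M.bind (𝟙 (M.obj P.carrier)) ≫ α = M.toKMonad.map α ≫ α)
        -- which ι exhibits as a T-subalgebra of (TA, μ_A)
        ∧ Mono P.ι
        ∧ (α ≫ P.ι = M.toKMonad.map P.ι ≫ M.bind (𝟙 (M.obj A))) := by
  -- `bind ι` is σ-guarded
  have hg : G.Guarded (M.bind P.ι) σ := by
    have h1 := G.trv (Z := P.carrier) (𝟙 (M.obj P.carrier))
    have h2 := G.cmp _ P.ι P.ι σ h1 P.guarded
    have heq : (𝟙 (M.obj P.carrier) ≫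
        M.toKMonad.map (coprod.inl : P.carrier ⟶ P.carrier ⨿ P.carrier)) ≫
        M.bind (coprod.desc P.ι P.ι) = M.bind P.ι := by
      rw [Category.id_comp, KMonad.map, ← M.bind_bind, Category.assoc, M.η_bind,
        coprod.inl_desc]
    rwa [heq] at h2
  obtain ⟨α, hα, hαu⟩ := P.factor (M.bind P.ι) hg
  -- ι is mono
  have hmono : Mono P.ι := by
    constructor
    intro Z a b hab
    have hga : G.Guarded (a ≫ P.ι) σ := by
      have h1 := G.trv (Z := P.carrier) (a ≫ M.η P.carrier)
      have h2 := G.cmp _ P.ι P.ι σ h1 P.guarded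
      have heq : ((a ≫ M.η P.carrier) ≫
          M.toKMonad.map (coprod.inl : P.carrier ⟶ P.carrier ⨿ P.carrier)) ≫
          M.bind (coprod.desc P.ι P.ι) = a ≫ P.ι := by
        rw [KMonad.map, Category.assoc, Category.assoc, ← M.bind_bind,
          M.η_bind, Category.assoc, M.η_bind, coprod.inl_desc]
      rwa [heq] at h2
    obtain ⟨c, _, hcu⟩ := P.factor (a ≫ P.ι) hga
    have ha := hcu a rfl
    have hb := hcu b hab
    rw [ha, hb]
  refine ⟨⟨α, hα.symm, fun β hβ => hαu β hβ.symm⟩, ?_⟩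
  intro β hβ
  refine ⟨?_, ?_, hmono, ?_⟩
  · have : (M.η P.carrier ≫ β) ≫ P.ι = 𝟙 P.carrier ≫ P.ι := by
      rw [Category.assoc, hβ, M.η_bind, Category.id_comp]
    exact hmono.right_cancellation _ _ this
  · have : (M.bind (𝟙 (M.obj P.carrier)) ≫ β) ≫ P.ι
        = (M.toKMonad.map β ≫ β) ≫ P.ι := by
      rw [Category.assoc, Category.assoc, hβ, ← M.bind_bind, Category.id_comp,
        KMonad.map, ← M.bind_bind, Category.assoc, M.η_bind, hβ]
    exact hmono.right_cancellation _ _ this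
  · rw [hβ, KMonad.map, ← M.bind_bind, Category.assoc, M.η_bind, Category.comp_id]
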